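/- For the Wei GFU model limit generating matrix H with entries H_{ii}=p^i and H_{ij}=q^j/(d-1) for i≠j (where q^j=1-p^j and 0<p^i<1), the vector v* with components v*^i = (1/q^i)/(∑_{j=1}^d 1/q^j) satisfies Hv*=v* and ∑_i v*^i = 1. -/

import Mathlib

open Finset

/-- For the Wei GFU model limit generating matrix `H` with `H i i = p i` and
`H i j = (1 - p j)/(d-1)` for `i ≠ j`, the vector `v` with
`v i = (1/(1-p i)) / ∑ j, 1/(1-p j)` satisfies `H v = v` and `∑ i, v i = 1`. -/
theorem stmt0 (d : ℕ) (hd : 2 ≤ d) (p : Fin d → ℝ) (hp : ∀ i, 0 < p i ∧ p i < 1)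
    (H : Matrix (Fin d) (Fin d) ℝ)
    (hH : ∀ i j, H i j = if i = j then p i else (1 - p j) / (d - 1))
    (v : Fin d → ℝ)
    (hv : ∀ i, v i = (1 / (1 - p i)) / ∑ j, 1 / (1 - p j)) :
    H.mulVec v = v ∧ ∑ i, v i = 1 := by
  have hq : ∀ i, (1 : ℝ) - p i ≠ 0 := fun i => by
    have := (hp i).2; linarith
  set S : ℝ := ∑ j, 1 / (1 - p j) with hS
  have hSpos : 0 < S := by
    apply Finset.sum_pos
    · intro j _
      exact div_pos one_pos (by linarith [(hp j).2])
    · exact Finset.univ_nonempty_iff.mpr ⟨⟨0, by omega⟩⟩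
  have hSne : S ≠ 0 := ne_of_gt hSpos
  have hd1 : (d : ℝ) - 1 ≠ 0 := by
    have : (2 : ℝ) ≤ d := by exact_mod_cast hd
    linarith
  have hqv : ∀ j, (1 - p j) * v j = 1 / S := fun j => by
    rw [hv j]; field_simp
    exact div_self (hq j)
  constructor
  · funext i
    rw [Matrix.mulVec, dotProduct]
    have hsplit : ∑ j, H i j * v j
        = p i * v i + ∑ j ∈ univ.erase i, ((1 - p j) / (d - 1)) * v j := by
      rw [← Finset.add_sum_erase _ _ (Finset.mem_univ i), hH i i, if_pos rfl]
      congr 1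
      apply Finset.sum_congr rfl
      intro j hj
      rw [hH i j, if_neg (Ne.symm (Finset.ne_of_mem_erase hj))]
    have hsum : ∑ j ∈ univ.erase i, ((1 - p j) / (d - 1)) * v j = 1 / S := by
      have : ∀ j ∈ univ.erase i, ((1 - p j) / (d - 1)) * v j = (1 / S) / (d - 1) := by
        intro j _
        rw [div_mul_eq_mul_div, hqv j]
      rw [Finset.sum_congr rfl this, Finset.sum_const, Finset.card_erase_of_mem (Finset.mem_univ i),
        Finset.card_univ, Fintype.card_fin, nsmul_eq_mul]
      have hcast : ((d - 1 : ℕ) : ℝ) = (d : ℝ) - 1 := by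
        have : 1 ≤ d := by omega
        push_cast [this]; ring
      rw [hcast]
      field_simp
    rw [hsplit, hsum, hv i]
    have hqi := hq i
    field_simp
    ring
  · have : ∑ i, v i = ∑ i, (1 / (1 - p i)) / S := by
      exact Finset.sum_congr rfl fun i _ => hv i
    rw [this, ← Finset.sum_div, ← hS, div_self hSne]
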